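/- Suppose J⁺-invariants of four immersed loops K, K₁, K₂ and their images under the inversion φ(z)=1/z satisfy: (i) J⁺(φ(γ)) - J⁺(γ) = 2 w₀(γ)(r(γ) - w₀(γ)) for γ ∈ {K, K₁, K₂}; (ii) φ(K) = φ(K₁) # φ(K₂) with J⁺ additive under connected sum: J⁺(φ(K)) = J⁺(φ(K₁)) + J⁺(φ(K₂)); (iii) w₀(K₂) = 0, w₀(K) = w₀(K₁), and r(K) = r(K₁) + r(K₂) + 1. Then J⁺(K) = J⁺(K₁) + J⁺(K₂) - 2 w₀(K₁)(r(K₂) + 1). In particular J⁺(K) ≡ J⁺(K₁) + J⁺(K₂) modulo 2|w₀(K₁)|. -/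
import Mathlib


/-- The interior connected sum formula. Given integer invariants `J⁺`, winding numbers
`w₀` and rotation numbers `r` of loops `K, K₁, K₂` and their inversions `φ(K), φ(K₁),
φ(K₂)` satisfying: (i) `J⁺(φ(γ)) - J⁺(γ) = 2w₀(γ)(r(γ) - w₀(γ))` for `γ ∈ {K, K₁, K₂}`;
(ii) `J⁺(φ(K)) = J⁺(φ(K₁)) + J⁺(φ(K₂))` (additivity under connected sum); (iii)
`w₀(K₂) = 0`, `w₀(K) = w₀(K₁)`, `r(K) = r(K₁) + r(K₂) + 1`; then
`J⁺(K) = J⁺(K₁) + J⁺(K₂) - 2w₀(K₁)(r(K₂)+1)`, so in particular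
`J⁺(K) ≡ J⁺(K₁) + J⁺(K₂) mod 2|w₀(K₁)|`. -/
theorem interior_connected_sum_formula
    (JK JK₁ JK₂ JφK JφK₁ JφK₂ wK wK₁ wK₂ rK rK₁ rK₂ : ℤ)
    (h₁ : JφK - JK = 2 * wK * (rK - wK))
    (h₂ : JφK₁ - JK₁ = 2 * wK₁ * (rK₁ - wK₁))
    (h₃ : JφK₂ - JK₂ = 2 * wK₂ * (rK₂ - wK₂))
    (hadd : JφK = JφK₁ + JφK₂)
    (hw₂ : wK₂ = 0) (hw : wK = wK₁) (hr : rK = rK₁ + rK₂ + 1) :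
    JK = JK₁ + JK₂ - 2 * wK₁ * (rK₂ + 1) ∧
    (2 * |wK₁|) ∣ (JK - (JK₁ + JK₂)) := by
  subst hw₂ hw hr
  constructor
  · linarith
  · have : JK - (JK₁ + JK₂) = (2 * |wK|) * (-(Int.sign wK * (rK₂ + 1))) := by
      rcases lt_trichotomy wK 0 with h|h|h
      · simp [abs_of_neg h, Int.sign_eq_neg_one_iff_neg.mpr h]; ring_nf; linarith
      · subst h; simp; linarith
      · simp [abs_of_pos h, Int.sign_eq_one_iff_pos.mpr h]; ring_nf; linarith
    exact ⟨_, this⟩
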